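/- Let R be a commutative ring and e ≥ 1 an integer. Regard R((z)) as a subring of R((z^{1/e})) via z ↦ (z^{1/e})^e. Suppose f ∈ R((z^{1/e})) is invertible, with all coefficients of negative-degree terms lying in a nilpotent ideal and constant-like leading coefficient invertible, and suppose f^e ∈ R((z)). Then there exists an integer i with 0 ≤ i < e such that z^{i/e}·f ∈ R((z)). -/

import Mathlib

open Finset

namespace RootShiftAux

variable {S : Type*} [CommRing S]

open scoped Classical in
/-- Restriction of a Hahn series to a set of exponents. -/
noncomputable def restrict (x : HahnSeries ℤ S) (P : Set ℤ) : HahnSeries ℤ S where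
  coeff a := if a ∈ P then x.coeff a else 0
  isPWO_support' := x.isPWO_support.mono (fun a ha => by
    by_cases h : a ∈ P
    · simpa [Function.mem_support, h] using ha
    · simp [Function.mem_support, h] at ha)

open scoped Classical in
lemma restrict_coeff (x : HahnSeries ℤ S) (P : Set ℤ) (a : ℤ) :
    (restrict x P).coeff a = if a ∈ P then x.coeff a else 0 := rfl

lemma mul_coeff_eq_zero {x y : HahnSeries ℤ S} {a : ℤ}
    (h : ∀ i j : ℤ, i + j = a → x.coeff i * y.coeff j = 0) : (x * y).coeff a = 0 := by
  rw [HahnSeries.coeff_mul]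
  exact Finset.sum_eq_zero fun ij hij => h ij.1 ij.2 (Finset.mem_addAntidiagonal.mp hij).2.2

lemma mul_eq_zero_of_coeff {x y : HahnSeries ℤ S}
    (h : ∀ i j : ℤ, x.coeff i * y.coeff j = 0) : x * y = 0 := by
  ext a
  rw [HahnSeries.coeff_zero]
  exact mul_coeff_eq_zero fun i j _ => h i j

lemma support_pow_dvd {g : HahnSeries ℤ S} {d : ℤ} (hg : ∀ a ∈ g.support, d ∣ a) :
    ∀ n : ℕ, ∀ a ∈ (g ^ n).support, d ∣ a := by
  intro n
  induction n with
  | zero =>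
    intro a ha
    rw [pow_zero, HahnSeries.mem_support] at ha
    by_cases h0 : a = 0
    · simp [h0]
    · simp [HahnSeries.coeff_one, h0] at ha
  | succ n ih =>
    intro a ha
    rw [pow_succ] at ha
    obtain ⟨i, hi, j, hj, rfl⟩ := HahnSeries.support_mul_subset ha
    exact dvd_add (ih i hi) (hg j hj)

lemma support_pow_Ici {x : HahnSeries ℤ S} {c : ℤ} (hx : ∀ a ∈ x.support, c ≤ a) :
    ∀ n : ℕ, ∀ a ∈ (x ^ (n + 1)).support, ((n : ℤ) + 1) * c ≤ a := by
  intro n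
  induction n with
  | zero => intro a ha; rw [pow_one] at ha; simpa using hx a ha
  | succ n ih =>
    intro a ha
    rw [pow_succ] at ha
    obtain ⟨i, hi, j, hj, rfl⟩ := HahnSeries.support_mul_subset ha
    have h1 := ih i hi
    have h2 := hx j hj
    push_cast
    linarith

lemma ann_mul {r : S} {x : HahnSeries ℤ S} (hx : ∀ c : ℤ, r * x.coeff c = 0)
    (y : HahnSeries ℤ S) (a : ℤ) : r * (x * y).coeff a = 0 := by
  rw [HahnSeries.coeff_mul, Finset.mul_sum]
  exact Finset.sum_eq_zero fun ij _ => by rw [← mul_assoc, hx, zero_mul]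

lemma ann_pow {r : S} {x : HahnSeries ℤ S} (hx : ∀ c : ℤ, r * x.coeff c = 0)
    (n : ℕ) (a : ℤ) : r * (x ^ (n + 1)).coeff a = 0 := by
  rw [pow_succ']
  exact ann_mul hx _ a

/-- If negative coefficients of `g` annihilate all coefficients of `h`, so do negative
coefficients of powers of `g`. -/
lemma neg_coeff_pow_ann {g h : HahnSeries ℤ S}
    (hgh : ∀ i : ℤ, i < 0 → ∀ c : ℤ, g.coeff i * h.coeff c = 0) :
    ∀ t : ℕ, ∀ m : ℤ, m < 0 → ∀ c : ℤ, (g ^ t).coeff m * h.coeff c = 0 := by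
  intro t
  induction t with
  | zero =>
    intro m hm c
    rw [pow_zero, HahnSeries.coeff_one, if_neg (by omega), zero_mul]
  | succ t ih =>
    intro m hm c
    rw [pow_succ', HahnSeries.coeff_mul, Finset.sum_mul]
    refine Finset.sum_eq_zero fun ij hij => ?_
    have hsum : ij.1 + ij.2 = m := (Finset.mem_addAntidiagonal.mp hij).2.2
    rcases lt_or_ge ij.1 0 with h1 | h1
    · rw [mul_right_comm, hgh ij.1 h1 c, zero_mul]
    · have h2 : ij.2 < 0 := by omega
      rw [mul_assoc, ih ij.2 h2 c, mul_zero]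

lemma zero_coeff_pow_ann {g h : HahnSeries ℤ S}
    (hgh : ∀ i : ℤ, i < 0 → ∀ c : ℤ, g.coeff i * h.coeff c = 0) :
    ∀ t : ℕ, ∀ c : ℤ, (g ^ t).coeff 0 * h.coeff c = g.coeff 0 ^ t * h.coeff c := by
  intro t
  induction t with
  | zero => intro c; simp
  | succ t ih =>
    intro c
    rw [pow_succ', HahnSeries.coeff_mul, Finset.sum_mul]
    rw [Finset.sum_eq_single ((0 : ℤ), (0 : ℤ))]
    · rw [mul_assoc, ih c, ← mul_assoc, ← pow_succ']
    · intro ij hij hne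
      have hsum : ij.1 + ij.2 = 0 := (Finset.mem_addAntidiagonal.mp hij).2.2
      rcases lt_trichotomy ij.1 0 with h1 | h1 | h1
      · rw [mul_right_comm, hgh ij.1 h1 c, zero_mul]
      · exact absurd (Prod.ext h1 (by omega)) hne
      · have h2 : ij.2 < 0 := by omega
        rw [mul_assoc, neg_coeff_pow_ann hgh t ij.2 h2 c, mul_zero]
    · intro hnm
      by_cases h1 : g.coeff 0 = 0
      · rw [h1, zero_mul, zero_mul]
      · by_cases h2 : (g ^ t).coeff 0 = 0
        · rw [h2, mul_zero, zero_mul]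
        · exact absurd (Finset.mem_addAntidiagonal.mpr
            ⟨(HahnSeries.mem_support _ _).mpr h1, (HahnSeries.mem_support _ _).mpr h2,
              add_zero 0⟩) hnm

/-- The key lemma: if `F^e` is supported on multiples of `e`, the constant-like data is
invertible, and negative coefficients annihilate off-class coefficients, then all off-class
coefficients vanish. -/
lemma core (e : ℕ) (F : HahnSeries ℤ S)
    (hunit : IsUnit ((e : S) * F.coeff 0 ^ (e - 1)))
    (hb : ∀ k : ℤ, ¬ (e : ℤ) ∣ k → (F ^ e).coeff k = 0)
    (hc : ∀ i : ℤ, i < 0 → ∀ k : ℤ, ¬ (e : ℤ) ∣ k → F.coeff i * F.coeff k = 0) :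
    ∀ k : ℤ, ¬ (e : ℤ) ∣ k → F.coeff k = 0 := by
  rcases Nat.eq_zero_or_pos e with he0 | he
  · subst he0
    simp only [Nat.cast_zero, zero_mul, isUnit_zero_iff] at hunit
    haveI : Subsingleton S := subsingleton_of_zero_eq_one hunit
    intro k _
    exact Subsingleton.elim _ _
  by_contra hcon
  push_neg at hcon
  obtain ⟨k0, hk0d, hk0⟩ := hcon
  set T : Set ℤ := {k : ℤ | ¬ (e : ℤ) ∣ k ∧ F.coeff k ≠ 0} with hT
  have hTsub : T ⊆ F.support := fun k hk => hk.2
  have hWF : T.IsWF := F.isWF_support.mono hTsub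
  have hne : T.Nonempty := ⟨k0, hk0d, hk0⟩
  set k := hWF.min hne with hkdef
  have hkT : k ∈ T := hWF.min_mem hne
  have od : ¬ (e : ℤ) ∣ k := hkT.1
  have IH : ∀ k' : ℤ, k' < k → ¬ (e : ℤ) ∣ k' → F.coeff k' = 0 := by
    intro k' hlt hd
    by_contra hcc
    exact hWF.not_lt_min hne (⟨hd, hcc⟩ : k' ∈ T) hlt
  classical
  set h : HahnSeries ℤ S := restrict F {a : ℤ | ¬ (e : ℤ) ∣ a} with hhdef
  set g : HahnSeries ℤ S := F - h with hgdef
  have hco : ∀ a : ℤ, h.coeff a = if ¬ (e : ℤ) ∣ a then F.coeff a else 0 := by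
    intro a
    rw [hhdef, restrict_coeff]
    simp [Set.mem_setOf_eq]
  have hgco : ∀ a : ℤ, g.coeff a = if (e : ℤ) ∣ a then F.coeff a else 0 := by
    intro a
    rw [hgdef, HahnSeries.coeff_sub, hco a]
    by_cases hd : (e : ℤ) ∣ a <;> simp [hd]
  have hgsupp : ∀ a ∈ g.support, (e : ℤ) ∣ a := by
    intro a ha
    rw [HahnSeries.mem_support, hgco a] at ha
    by_contra hd
    simp [hd] at ha
  have hhsupp : ∀ a ∈ h.support, k ≤ a := by
    intro a ha
    rw [HahnSeries.mem_support, hco a] at ha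
    by_contra hlt
    push_neg at hlt
    by_cases hd : (e : ℤ) ∣ a
    · simp [hd] at ha
    · simp only [hd, not_false_iff, if_true] at ha
      exact ha (IH a hlt hd)
  have hann : ∀ i : ℤ, i < 0 → ∀ c : ℤ, F.coeff i * h.coeff c = 0 := by
    intro i hi c
    rw [hco c]
    by_cases hd : (e : ℤ) ∣ c
    · simp [hd]
    · simpa [hd] using hc i hi c hd
  have hgneg : ∀ i : ℤ, i < 0 → ∀ c : ℤ, g.coeff i * h.coeff c = 0 := by
    intro i hi c
    rw [hgco i]
    by_cases hd : (e : ℤ) ∣ i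
    · simpa [hd] using hann i hi c
    · simp [hd]
  -- splitting of h into its "high" part hp and "low negative" part hn
  set hp : HahnSeries ℤ S := restrict F {a : ℤ | ¬ (e : ℤ) ∣ a ∧ max k 1 ≤ a} with hpdef
  set hn : HahnSeries ℤ S := h - hp with hndef
  have hpco : ∀ a : ℤ, hp.coeff a =
      if (¬ (e : ℤ) ∣ a ∧ max k 1 ≤ a) then F.coeff a else 0 := by
    intro a
    rw [hpdef, restrict_coeff]
    simp [Set.mem_setOf_eq]
  have hpsupp : ∀ a ∈ hp.support, max k 1 ≤ a := by
    intro a ha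
    rw [HahnSeries.mem_support, hpco a] at ha
    by_cases hcond : (¬ (e : ℤ) ∣ a ∧ max k 1 ≤ a)
    · exact hcond.2
    · rw [if_neg hcond] at ha
      exact absurd rfl ha
  have hnco : ∀ a : ℤ, hn.coeff a =
      if (¬ (e : ℤ) ∣ a ∧ ¬ max k 1 ≤ a) then F.coeff a else 0 := by
    intro a
    rw [hndef, HahnSeries.coeff_sub, hco a, hpco a]
    by_cases hd : (e : ℤ) ∣ a <;> by_cases hm : max k 1 ≤ a <;> simp [hd, hm]
  have hnneg : ∀ a : ℤ, hn.coeff a ≠ 0 → a < 0 := by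
    intro a ha
    rw [hnco a] at ha
    by_cases hcond : (¬ (e : ℤ) ∣ a ∧ ¬ max k 1 ≤ a)
    · obtain ⟨hd, hm⟩ := hcond
      rw [if_pos ⟨hd, hm⟩] at ha
      by_contra hge
      push_neg at hge
      have hak : a < k ∨ (k ≤ a ∧ a < max k 1) := by omega
      rcases hak with h1 | ⟨h1, h2⟩
      · exact ha (IH a h1 hd)
      · have ha0 : a = 0 := by omega
        exact hd (ha0 ▸ dvd_zero _)
    · rw [if_neg hcond] at ha
      exact absurd rfl ha
  have hn_ann_h : ∀ a c : ℤ, hn.coeff a * h.coeff c = 0 := by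
    intro a c
    by_cases hz : hn.coeff a = 0
    · rw [hz, zero_mul]
    · have ha : a < 0 := hnneg a hz
      have heq : hn.coeff a = F.coeff a := by
        rw [hnco a] at hz ⊢
        by_cases hcond : (¬ (e : ℤ) ∣ a ∧ ¬ max k 1 ≤ a)
        · rw [if_pos hcond]
        · exact absurd (if_neg hcond) hz
      rw [heq]
      exact hann a ha c
  have hp_sub_h : ∀ c : ℤ, hp.coeff c = h.coeff c ∨ hp.coeff c = 0 := by
    intro c
    rw [hpco c, hco c]
    by_cases hcond : (¬ (e : ℤ) ∣ c ∧ max k 1 ≤ c)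
    · rw [if_pos hcond, if_pos hcond.1]
      exact Or.inl rfl
    · rw [if_neg hcond]
      exact Or.inr rfl
  have hn_ann_hp : ∀ a c : ℤ, hn.coeff a * hp.coeff c = 0 := by
    intro a c
    rcases hp_sub_h c with hh | hh
    · rw [hh]; exact hn_ann_h a c
    · rw [hh, mul_zero]
  have hsplit : h = hp + hn := by rw [hndef]; ring
  have hFsplit : F = g + h := by rw [hgdef]; ring
  have hn_mul_h : hn * h = 0 := mul_eq_zero_of_coeff hn_ann_h
  have hn_mul_hp : hn * hp = 0 := mul_eq_zero_of_coeff hn_ann_hp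
  have hn_mul_hp_pow : ∀ n : ℕ, hn * hp ^ (n + 1) = 0 := by
    intro n
    exact mul_eq_zero_of_coeff fun i j => ann_pow (fun c => hn_ann_hp i c) n j
  have hppow : ∀ n : ℕ, h ^ (n + 2) = hp ^ (n + 2) := by
    intro n
    induction n with
    | zero =>
      calc h ^ 2 = (hp + hn) * h := by rw [← hsplit, sq]
        _ = hp * h := by rw [add_mul, hn_mul_h, add_zero]
        _ = hp * (hp + hn) := by rw [← hsplit]
        _ = hp * hp := by rw [mul_add, mul_comm hp hn, hn_mul_hp, add_zero]
        _ = hp ^ 2 := (sq hp).symm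
    | succ n ih =>
      calc h ^ (n + 3) = h ^ (n + 2) * h := by rw [pow_succ]
        _ = hp ^ (n + 2) * h := by rw [ih]
        _ = hp ^ (n + 2) * (hp + hn) := by rw [← hsplit]
        _ = hp ^ (n + 2) * hp := by
            rw [mul_add, mul_comm (hp ^ (n + 2)) hn, hn_mul_hp_pow (n + 1), add_zero]
        _ = hp ^ (n + 3) := by rw [← pow_succ]
  -- the three coefficient computations
  have T1 : (g ^ e).coeff k = 0 := by
    by_contra hco0
    exact od (support_pow_dvd hgsupp e k ((HahnSeries.mem_support _ _).mpr hco0))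
  have T2 : ∀ j : ℕ, (g ^ (e - (j + 2)) * h ^ (j + 2)).coeff k = 0 := by
    intro j
    rw [hppow j]
    refine mul_coeff_eq_zero fun i a hia => ?_
    by_cases hpa : (hp ^ (j + 2)).coeff a = 0
    · rw [hpa, mul_zero]
    · have hamem : a ∈ (hp ^ (j + 2)).support := (HahnSeries.mem_support _ _).mpr hpa
      have hage : ((j : ℤ) + 1 + 1) * max k 1 ≤ a := by
        have := support_pow_Ici hpsupp (j + 1) a (by
          have : (j + 1) + 1 = j + 2 := rfl
          rw [this]; exact hamem)
        push_cast at this ⊢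
        linarith
      have hmax1 : (1 : ℤ) ≤ max k 1 := le_max_right _ _
      have hmaxk : k ≤ max k 1 := le_max_left _ _
      have hka : k < a := by nlinarith
      have hi0 : i < 0 := by omega
      have hr : ∀ c : ℤ, (g ^ (e - (j + 2))).coeff i * hp.coeff c = 0 := by
        intro c
        have hgp : ∀ i' : ℤ, i' < 0 → ∀ c' : ℤ, g.coeff i' * hp.coeff c' = 0 := by
          intro i' hi' c'
          rcases hp_sub_h c' with hh | hh
          · rw [hh]; exact hgneg i' hi' c'
          · rw [hh, mul_zero]
        exact neg_coeff_pow_ann hgp (e - (j + 2)) i hi0 c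
      exact ann_pow hr (j + 1) a
  have T3 : (g ^ (e - 1) * h).coeff k = F.coeff 0 ^ (e - 1) * F.coeff k := by
    rw [HahnSeries.coeff_mul, Finset.sum_eq_single ((0 : ℤ), k)]
    · rw [zero_coeff_pow_ann hgneg (e - 1) k, hgco 0, if_pos (dvd_zero _), hco k, if_pos od]
    · intro ij hij hne'
      obtain ⟨hi, hj, hsum⟩ := Finset.mem_addAntidiagonal.mp hij
      rcases lt_trichotomy ij.1 0 with h1 | h1 | h1
      · exact neg_coeff_pow_ann hgneg (e - 1) ij.1 h1 ij.2
      · exact absurd (Prod.ext h1 (by omega)) hne'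
      · have := hhsupp ij.2 hj
        omega
    · intro hnm
      by_cases h1 : (g ^ (e - 1)).coeff 0 = 0
      · rw [h1, zero_mul]
      · by_cases h2 : h.coeff k = 0
        · rw [h2, mul_zero]
        · exact absurd (Finset.mem_addAntidiagonal.mpr
            ⟨(HahnSeries.mem_support _ _).mpr h1, (HahnSeries.mem_support _ _).mpr h2,
              zero_add k⟩) hnm
  -- assembling via the binomial theorem
  have hterm : ∀ (x : HahnSeries ℤ S) (c : ℕ) (a : ℤ),
      (x * (c : HahnSeries ℤ S)).coeff a = (c : S) * x.coeff a := by
    intro x c a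
    rw [mul_comm, ← nsmul_eq_mul]
    have hh := map_nsmul (HahnSeries.coeff.addMonoidHom a) c x
    simp only [HahnSeries.coeff.addMonoidHom_apply] at hh
    rw [hh, nsmul_eq_mul]
  have key : (F ^ e).coeff k = (e : S) * (F.coeff 0 ^ (e - 1) * F.coeff k) := by
    conv_lhs => rw [hFsplit]
    rw [add_pow]
    have hsum := map_sum (HahnSeries.coeff.addMonoidHom k)
      (fun m => g ^ m * h ^ (e - m) * ((e.choose m : ℕ) : HahnSeries ℤ S)) (Finset.range (e + 1))
    simp only [HahnSeries.coeff.addMonoidHom_apply] at hsum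
    rw [hsum]
    rw [Finset.sum_eq_single (e - 1)]
    · rw [hterm]
      have h1 : e - (e - 1) = 1 := by omega
      have h2 : e.choose (e - 1) = e := by
        have h3 : e.choose (e - (e - 1)) = e.choose (e - 1) := Nat.choose_symm (Nat.sub_le e 1)
        rw [show e - (e - 1) = 1 by omega] at h3
        rw [← h3, Nat.choose_one_right]
      rw [h1, pow_one, h2, T3]
    · intro m hm hme
      rw [hterm]
      rw [Finset.mem_range] at hm
      rcases Nat.lt_or_ge m (e - 1) with hlt | hge
      · have hj : ∃ j : ℕ, e - m = j + 2 := ⟨e - m - 2, by omega⟩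
        obtain ⟨j, hj⟩ := hj
        have hm' : m = e - (j + 2) := by omega
        rw [hj, hm', T2 j, mul_zero]
      · have hme' : m = e := by omega
        rw [hme', Nat.sub_self, pow_zero, mul_one, T1, mul_zero]
    · intro hnm
      exact absurd (Finset.mem_range.mpr (by omega)) hnm
  have h0 := hb k od
  rw [key, ← mul_assoc] at h0
  exact hkT.2 ((IsUnit.mul_right_eq_zero hunit).mp h0)

end RootShiftAux

/-- Let `R` be a commutative (ℂ-)algebra and `e ≥ 1`.  Model
`W = R((z^{1/e}))` as `HahnSeries ℤ R` in the variable `t = z^{1/e}`, so that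
`R((z))` is the subring of series supported on exponents divisible by `e`.
If `f ∈ R((z^{1/e}))` is invertible, with all negative coefficients nilpotent and
the `0`-th coefficient invertible, and `f^e ∈ R((z))`, then there is `0 ≤ i < e`
with `z^{i/e}·f ∈ R((z))`. -/
theorem exists_root_shift_mem_base
    (R : Type*) [CommRing R] [Algebra ℂ R] (e : ℕ) (he : 0 < e)
    (f : HahnSeries ℤ R)
    (hf : IsUnit f)
    (hneg : ∀ i : ℤ, i < 0 → IsNilpotent (f.coeff i))
    (h0 : IsUnit (f.coeff 0))
    (hfe : ∀ k : ℤ, ¬ (e : ℤ) ∣ k → (f ^ e).coeff k = 0) :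
    ∃ i : ℕ, i < e ∧ ∀ k : ℤ, ¬ (e : ℤ) ∣ k →
      ((HahnSeries.single (i : ℤ) 1 : HahnSeries ℤ R) * f).coeff k = 0 := by
  classical
  have heR : IsUnit ((e : R)) := by
    have h1 : ((e : ℂ) : ℂ) ≠ 0 := by
      exact_mod_cast Nat.cast_ne_zero.mpr he.ne'
    have h2 : IsUnit ((e : ℂ)) := isUnit_iff_ne_zero.mpr h1
    have h3 := h2.map (algebraMap ℂ R)
    rwa [map_natCast] at h3
  set I : Ideal R := Ideal.span (f.coeff '' Set.Iio 0) with hIdef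
  have hIrad : I ≤ nilradical R := by
    rw [Ideal.span_le]
    rintro x ⟨i, hi, rfl⟩
    exact hneg i hi
  have hfin : (f.coeff '' Set.Iio 0).Finite := by
    have hsub : f.coeff '' Set.Iio 0 ⊆ (f.coeff '' (Set.Iio 0 ∩ f.support)) ∪ {0} := by
      rintro x ⟨i, hi, rfl⟩
      by_cases hs : i ∈ f.support
      · exact Or.inl ⟨i, ⟨hi, hs⟩, rfl⟩
      · right
        simp only [Set.mem_singleton_iff]
        by_contra hx
        exact hs ((HahnSeries.mem_support _ _).mpr hx)
    refine Set.Finite.subset (Set.Finite.union (Set.Finite.image _ ?_) (Set.finite_singleton 0)) hsub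
    by_cases hne : (Set.Iio (0:ℤ) ∩ f.support).Nonempty
    · have hWF : (Set.Iio (0:ℤ) ∩ f.support).IsWF :=
        f.isWF_support.mono (Set.inter_subset_right)
      refine Set.Finite.subset (Set.finite_Icc (hWF.min hne) (-1)) ?_
      intro a ha
      refine Set.mem_Icc.mpr ⟨hWF.min_le hne ha, ?_⟩
      have : a < 0 := ha.1
      omega
    · rw [Set.not_nonempty_iff_eq_empty] at hne
      rw [hne]
      exact Set.finite_empty
  have hFG : I.FG := Submodule.fg_span hfin
  obtain ⟨M, hM⟩ : ∃ n : ℕ, I ^ n ≤ ⊥ := by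
    refine Ideal.exists_pow_le_of_le_radical_of_fg ?_ hFG
    rw [← Submodule.zero_eq_bot]
    exact hIrad
  have hstep : ∀ s : ℕ, (∀ k : ℤ, ¬ (e : ℤ) ∣ k → f.coeff k ∈ I ^ s) →
      ∀ k : ℤ, ¬ (e : ℤ) ∣ k → f.coeff k ∈ I ^ (s + 1) := by
    intro s hs
    set K : Ideal R := I ^ (s + 1) with hK
    set φ : R →+* R ⧸ K := Ideal.Quotient.mk K with hφ
    set F : HahnSeries ℤ (R ⧸ K) := f.map φ with hFdef
    have hFco : ∀ a : ℤ, F.coeff a = φ (f.coeff a) := fun a => rfl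
    have hmapmul : ∀ x y : HahnSeries ℤ R, (x * y).map φ = (x.map φ) * (y.map φ) := by
      intro x y
      have h1 := HahnSeries.map_mul (R := R) (S := R ⧸ K) (φ.toNonUnitalRingHom) (x := x) (y := y)
      have e1 : ∀ z : HahnSeries ℤ R, z.map φ.toNonUnitalRingHom = z.map φ := fun z => rfl
      rw [e1, e1, e1] at h1
      exact h1
    have hmapone : (1 : HahnSeries ℤ R).map φ = 1 := by
      ext a
      by_cases ha : a = 0 <;> simp [HahnSeries.coeff_one, ha]
    have hFpow : ∀ n : ℕ, (f ^ n).map φ = F ^ n := by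
      intro n
      induction n with
      | zero => rw [pow_zero, pow_zero]; exact hmapone
      | succ n ih => rw [pow_succ, pow_succ, hmapmul, ih]
    have hunit : IsUnit ((e : R ⧸ K) * F.coeff 0 ^ (e - 1)) := by
      have hu : IsUnit ((e : R) * f.coeff 0 ^ (e - 1)) := heR.mul (h0.pow _)
      have hu2 := hu.map φ
      rwa [map_mul, map_natCast, map_pow] at hu2
    have hb : ∀ k : ℤ, ¬ (e : ℤ) ∣ k → (F ^ e).coeff k = 0 := by
      intro k hk
      rw [← hFpow e]
      show φ ((f ^ e).coeff k) = 0
      rw [hfe k hk, map_zero]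
    have hc : ∀ i : ℤ, i < 0 → ∀ k : ℤ, ¬ (e : ℤ) ∣ k → F.coeff i * F.coeff k = 0 := by
      intro i hi k hk
      show φ (f.coeff i) * φ (f.coeff k) = 0
      rw [← map_mul, hφ, Ideal.Quotient.eq_zero_iff_mem]
      have h1 : f.coeff i ∈ I := Ideal.subset_span ⟨i, hi, rfl⟩
      have h2 : f.coeff k ∈ I ^ s := hs k hk
      have h3 := Ideal.mul_mem_mul h1 h2
      rwa [← pow_succ'] at h3
    intro k hk
    have hcore := RootShiftAux.core (S := R ⧸ K) e F hunit hb hc k hk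
    rw [hFco k, hφ, Ideal.Quotient.eq_zero_iff_mem] at hcore
    exact hcore
  have hall : ∀ s : ℕ, ∀ k : ℤ, ¬ (e : ℤ) ∣ k → f.coeff k ∈ I ^ s := by
    intro s
    induction s with
    | zero =>
      intro k hk
      rw [pow_zero, Ideal.one_eq_top]
      exact Submodule.mem_top
    | succ s ih => exact hstep s ih
  refine ⟨0, he, ?_⟩
  intro k hk
  have hfk : f.coeff k = 0 := by
    have hmem := hM (hall M k hk)
    simpa using hmem
  have hone : (HahnSeries.single (((0 : ℕ) : ℤ)) (1 : R) : HahnSeries ℤ R) = 1 := by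
    rw [Nat.cast_zero, HahnSeries.single_zero_one]
  rw [hone, one_mul]
  exact hfk
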